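/- Let 1 ≤ p ≤ ∞ and let D₁, ..., Dₘ be bounded multiplication operators on L^p(X,μ) (i.e., Dᵢ f = dᵢ·f for functions dᵢ ∈ L^∞(X,μ)) such that D₁ D₂ ⋯ Dₘ = I. Then for every bounded operator A on L^p(X,μ), ‖A‖^m ≤ ‖D₁A‖·‖D₂A‖ ⋯ ‖DₘA‖, where ‖·‖ denotes the operator norm. -/

import Mathlib

open MeasureTheory ENNReal

private lemma essSup_rpow_aux {X : Type*} [MeasurableSpace X] (μ : Measure X)
    (f : X → ℝ≥0∞) {c : ℝ} (hc : 0 < c) :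
    essSup (fun x => f x ^ c) μ = essSup f μ ^ c := by
  have h_rpow_mono := ENNReal.strictMono_rpow_of_pos hc
  have h_rpow_surj := (ENNReal.rpow_left_bijective hc.ne').2
  let iso := h_rpow_mono.orderIsoOfSurjective _ h_rpow_surj
  exact (iso.essSup_apply f μ).symm

private lemma essSup_finset_prod_le {X ι : Type*} [MeasurableSpace X] (μ : Measure X)
    (s : Finset ι) (F : ι → X → ℝ≥0∞) :
    essSup (fun x => ∏ i ∈ s, F i x) μ ≤ ∏ i ∈ s, essSup (F i) μ := by
  classical
  induction s using Finset.induction with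
  | empty =>
    simpa using essSup_le_of_ae_le 1 (Filter.Eventually.of_forall (by simp))
  | insert a s hi ih =>
    simp only [Finset.prod_insert hi]
    exact le_trans (ENNReal.essSup_mul_le _ _) (mul_le_mul_right ih _)

private lemma key_eLpNorm {X : Type*} [MeasurableSpace X] {μ : Measure X} {p : ℝ≥0∞}
    (hp : 1 ≤ p) {m : ℕ} (hm : 0 < m) (d : Fin m → X → ℂ) (g : X → ℂ)
    (hmeas : ∀ i, AEStronglyMeasurable (fun x => d i x * g x) μ)
    (hprod : (fun x => ∏ i, d i x) =ᵐ[μ] fun _ => 1) :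
    eLpNorm g p μ ^ m ≤ ∏ i : Fin m, eLpNorm (fun x => d i x * g x) p μ := by
  have hp0 : p ≠ 0 := fun h => by simp [h] at hp
  -- pointwise identity
  have hpt : ∀ᵐ x ∂μ, ∏ i : Fin m, (‖d i x * g x‖₊ : ℝ≥0∞) = (‖g x‖₊ : ℝ≥0∞) ^ m := by
    filter_upwards [hprod] with x hx
    have h1 : ∏ i : Fin m, (d i x * g x) = g x ^ m := by
      rw [Finset.prod_mul_distrib, hx, one_mul, Finset.prod_const, Finset.card_univ,
        Fintype.card_fin]
    have h2 : ∏ i : Fin m, ‖d i x * g x‖₊ = ‖g x‖₊ ^ m := by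
      rw [← nnnorm_prod, h1, nnnorm_pow]
    rw [← ENNReal.coe_pow, ← h2, ENNReal.coe_finset_prod]
  by_cases hptop : p = ∞
  · subst hptop
    simp only [eLpNorm_exponent_top, eLpNormEssSup, enorm_eq_nnnorm]
    have h1 : essSup (fun x => (‖g x‖₊ : ℝ≥0∞)) μ ^ m
        = essSup (fun x => (‖g x‖₊ : ℝ≥0∞) ^ m) μ := by
      rw [← ENNReal.rpow_natCast, ← essSup_rpow_aux μ _ (by exact_mod_cast hm)]
      congr 1; ext x; rw [ENNReal.rpow_natCast]
    rw [h1, ← essSup_congr_ae hpt]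
    exact essSup_finset_prod_le μ Finset.univ _
  · have hpt0 : 0 < p.toReal := ENNReal.toReal_pos hp0 hptop
    rw [eLpNorm_eq_lintegral_rpow_enorm_toReal hp0 hptop]
    have heq : ∀ i : Fin m, eLpNorm (fun x => d i x * g x) p μ
        = (∫⁻ x, (‖d i x * g x‖₊ : ℝ≥0∞) ^ p.toReal ∂μ) ^ (1 / p.toReal) := fun i =>
      eLpNorm_eq_lintegral_rpow_enorm_toReal hp0 hptop
    simp only [heq]
    -- Hölder
    have hholder : ∫⁻ x, (‖g x‖₊ : ℝ≥0∞) ^ p.toReal ∂μ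
        ≤ ∏ i : Fin m, (∫⁻ x, (‖d i x * g x‖₊ : ℝ≥0∞) ^ p.toReal ∂μ) ^ ((1 : ℝ) / m) := by
      have := ENNReal.lintegral_prod_norm_pow_le (μ := μ) Finset.univ
        (f := fun (i : Fin m) (x : X) => (‖d i x * g x‖₊ : ℝ≥0∞) ^ p.toReal)
        (fun i _ => ((hmeas i).enorm.pow_const p.toReal))
        (p := fun _ : Fin m => (1 : ℝ) / m)
        (by simp [Finset.card_univ]; field_simp)
        (fun i _ => by positivity)
      refine le_trans (le_of_eq ?_) this
      refine lintegral_congr_ae ?_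
      filter_upwards [hpt] with x hx
      have h3 : ∀ i : Fin m, ((‖d i x * g x‖₊ : ℝ≥0∞) ^ p.toReal) ^ ((1:ℝ)/m)
          = (‖d i x * g x‖₊ : ℝ≥0∞) ^ (p.toReal * ((1:ℝ)/m)) := fun i =>
        (ENNReal.rpow_mul _ _ _).symm
      simp only [h3]
      rw [ENNReal.prod_rpow_of_nonneg (by positivity), hx, ← ENNReal.rpow_natCast,
        ← ENNReal.rpow_mul]
      congr 1
      field_simp
    calc ((∫⁻ x, (‖g x‖₊ : ℝ≥0∞) ^ p.toReal ∂μ) ^ (1 / p.toReal)) ^ m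
        = (∫⁻ x, (‖g x‖₊ : ℝ≥0∞) ^ p.toReal ∂μ) ^ ((1 / p.toReal) * m) := by
          rw [← ENNReal.rpow_natCast _ m, ← ENNReal.rpow_mul]
      _ ≤ (∏ i : Fin m, (∫⁻ x, (‖d i x * g x‖₊ : ℝ≥0∞) ^ p.toReal ∂μ) ^ ((1 : ℝ) / m))
            ^ ((1 / p.toReal) * m) := by
          exact ENNReal.rpow_le_rpow hholder (by positivity)
      _ = ∏ i : Fin m, (∫⁻ x, (‖d i x * g x‖₊ : ℝ≥0∞) ^ p.toReal ∂μ) ^ (1 / p.toReal) := by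
          rw [← ENNReal.prod_rpow_of_nonneg (by positivity)]
          refine Finset.prod_congr rfl fun i _ => ?_
          rw [← ENNReal.rpow_mul]
          congr 1
          field_simp

/-- Operator norm analogue of Cohen's inequality: if `D₁, …, Dₘ` are bounded
multiplication operators on `L^p(X, μ)` with `D₁ ⋯ Dₘ = I` (i.e. the product of the
multiplier functions is `1` a.e.), then `‖A‖^m ≤ ‖D₁A‖ ⋯ ‖DₘA‖`. -/
theorem norm_pow_le_prod_norm_mul_left
    {X : Type*} [MeasurableSpace X] (μ : Measure X) [SigmaFinite μ]
    (p : ℝ≥0∞) [Fact (1 ≤ p)] (m : ℕ)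
    (D : Fin m → (Lp ℂ p μ →L[ℂ] Lp ℂ p μ)) (d : Fin m → X → ℂ)
    (hD : ∀ i, ∀ f : Lp ℂ p μ, (D i f : X → ℂ) =ᵐ[μ] fun x => d i x * f x)
    (hprod : (fun x => ∏ i, d i x) =ᵐ[μ] fun _ => 1)
    (A : Lp ℂ p μ →L[ℂ] Lp ℂ p μ) :
    ‖A‖ ^ m ≤ ∏ i, ‖(D i).comp A‖ := by
  rcases Nat.eq_zero_or_pos m with hm | hm
  · subst hm; simp
  have hp : (1 : ℝ≥0∞) ≤ p := Fact.out
  set C : ℝ := ∏ i, ‖(D i).comp A‖ with hC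
  have hC0 : 0 ≤ C := Finset.prod_nonneg fun i _ => norm_nonneg _
  -- main estimate: for every f, ‖A f‖ ^ m ≤ C * ‖f‖ ^ m
  have hbound : ∀ f : Lp ℂ p μ, ‖A f‖ ^ m ≤ C * ‖f‖ ^ m := by
    intro f
    set g : Lp ℂ p μ := A f with hg
    have hmeas : ∀ i : Fin m, AEStronglyMeasurable (fun x => d i x * (g : X → ℂ) x) μ :=
      fun i => (Lp.aestronglyMeasurable (D i g)).congr (hD i g)
    have hkey := key_eLpNorm hp hm d (g : X → ℂ) hmeas hprod
    have heq : ∀ i : Fin m, eLpNorm (fun x => d i x * (g : X → ℂ) x) p μ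
        = eLpNorm ((D i g : Lp ℂ p μ) : X → ℂ) p μ :=
      fun i => (eLpNorm_congr_ae (hD i g)).symm
    simp only [heq] at hkey
    -- pass to real norms
    have h1 : ‖g‖ ^ m ≤ ∏ i : Fin m, ‖D i g‖ := by
      have hfin : (∏ i : Fin m, eLpNorm ((D i g : Lp ℂ p μ) : X → ℂ) p μ) ≠ ∞ :=
        ENNReal.prod_ne_top fun i _ => (Lp.eLpNorm_lt_top (D i g)).ne
      have := ENNReal.toReal_mono hfin hkey
      rw [ENNReal.toReal_pow, ENNReal.toReal_prod] at this
      simpa only [Lp.norm_def] using this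
    have h2 : ∏ i : Fin m, ‖D i g‖ ≤ C * ‖f‖ ^ m := by
      have : ∀ i ∈ (Finset.univ : Finset (Fin m)),
          ‖D i g‖ ≤ ‖(D i).comp A‖ * ‖f‖ := fun i _ => by
        simpa using ((D i).comp A).le_opNorm f
      calc ∏ i : Fin m, ‖D i g‖ ≤ ∏ i : Fin m, (‖(D i).comp A‖ * ‖f‖) :=
            Finset.prod_le_prod (fun i _ => norm_nonneg _) this
        _ = C * ‖f‖ ^ m := by
            rw [Finset.prod_mul_distrib, Finset.prod_const, Finset.card_univ,
              Fintype.card_fin]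
    exact h1.trans h2
  -- deduce the operator norm bound
  have hmR : (0 : ℝ) < m := by exact_mod_cast hm
  have hAle : ‖A‖ ≤ C ^ ((1 : ℝ) / m) := by
    refine A.opNorm_le_bound (Real.rpow_nonneg hC0 _) fun f => ?_
    have hpow : (C ^ ((1 : ℝ) / m) * ‖f‖) ^ m = C * ‖f‖ ^ m := by
      rw [mul_pow, ← Real.rpow_natCast (C ^ ((1 : ℝ) / m)) m, ← Real.rpow_mul hC0]
      rw [one_div, inv_mul_cancel₀ hmR.ne', Real.rpow_one]
    have := hbound f
    rw [← hpow] at this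
    exact le_of_pow_le_pow_left₀ hm.ne' (by positivity) this
  calc ‖A‖ ^ m ≤ (C ^ ((1 : ℝ) / m)) ^ m :=
        pow_le_pow_left₀ (norm_nonneg _) hAle m
    _ = C := by
        rw [← Real.rpow_natCast (C ^ ((1 : ℝ) / m)) m, ← Real.rpow_mul hC0,
          one_div, inv_mul_cancel₀ hmR.ne', Real.rpow_one]
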